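/- Let K be a consistent belief set and let ⊙ be an operator on K satisfying, for all sentences α, β: weak relative success (α ∈ K⊙α or K⊙α ⊆ K), closure (K⊙α = Cn(K⊙α)), inclusion (K⊙α ⊆ K + α), consistency preservation (if K is consistent then K⊙α is consistent), vacuity (if ¬α ∉ K then K + α ⊆ K⊙α), extensionality (if ⊢ α ↔ β then K⊙α = K⊙β), strict improvement (if α ∈ K⊙α and ⊢ α → β then β ∈ K⊙β), N-persistence (if ¬β ∈ K⊙β then ¬β ∈ K⊙α for all α), N-recovery (K ⊆ (K⊙α) + ¬α), disjunctive overlap (K⊙α ∩ K⊙β ⊆ K⊙(α ∨ β)) and disjunctive inclusion (if ¬α ∉ K⊙(α ∨ β) then K⊙(α ∨ β) ⊆ K⊙α). Then there exists a two level system of spheres (𝕊_i, 𝕊) centred on ‖K‖ such that for all α, K⊙α equals the outcome of the system of spheres-based two level CL revision operator induced by (𝕊_i, 𝕊) applied to α. -/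

import Mathlib

/-- A propositional language `L`: a type of sentences closed under the
truth-functional connectives, together with a consequence operator `Cn`
satisfying inclusion, monotony, iteration, supraclassicality, compactness
and deduction. Supraclassicality is expressed via Boolean valuations that
respect the connectives. -/
structure PropLanguage where
  Sentence : Type
  falsum : Sentence
  neg : Sentence → Sentence
  conj : Sentence → Sentence → Sentence
  disj : Sentence → Sentence → Sentence
  impl : Sentence → Sentence → Sentence
  biimpl : Sentence → Sentence → Sentence
  Cn : Set Sentence → Set Sentence
  cn_inclusion : ∀ A : Set Sentence, A ⊆ Cn A
  cn_monotony : ∀ A B : Set Sentence, A ⊆ B → Cn A ⊆ Cn B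
  cn_iteration : ∀ A : Set Sentence, Cn (Cn A) = Cn A
  cn_supraclassical : ∀ (A : Set Sentence) (α : Sentence),
    (∀ v : Sentence → Bool,
        v falsum = false →
        (∀ β, v (neg β) = !v β) →
        (∀ β γ, v (conj β γ) = (v β && v γ)) →
        (∀ β γ, v (disj β γ) = (v β || v γ)) →
        (∀ β γ, v (impl β γ) = (!v β || v γ)) →
        (∀ β γ, v (biimpl β γ) = (v β == v γ)) →
        (∀ β ∈ A, v β = true) → v α = true) →
    α ∈ Cn A
  cn_compact : ∀ (A : Set Sentence) (α : Sentence), α ∈ Cn A →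
    ∃ A' : Set Sentence, A' ⊆ A ∧ A'.Finite ∧ α ∈ Cn A'
  cn_deduction : ∀ (A : Set Sentence) (α β : Sentence),
    β ∈ Cn (A ∪ {α}) ↔ impl α β ∈ Cn A

namespace PropLanguage

variable (L : PropLanguage)

/-- A set of sentences is consistent iff it does not entail falsum. -/
def Consistent (A : Set L.Sentence) : Prop := L.falsum ∉ L.Cn A

/-- A belief set: a logically closed set of sentences. -/
def IsBeliefSet (K : Set L.Sentence) : Prop := K = L.Cn K

/-- Expansion: `K + α = Cn (K ∪ {α})`. -/
def expand (K : Set L.Sentence) (α : L.Sentence) : Set L.Sentence :=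
  L.Cn (K ∪ {α})

/-- A possible world: a maximal consistent set of sentences. -/
def IsWorld (M : Set L.Sentence) : Prop :=
  L.Consistent M ∧ ∀ M' : Set L.Sentence, L.Consistent M' → M ⊆ M' → M' = M

/-- `‖R‖`: the set of possible worlds containing `R`. -/
def worldsOf (R : Set L.Sentence) : Set (Set L.Sentence) :=
  {M | L.IsWorld M ∧ R ⊆ M}

/-- `‖α‖`: the set of possible worlds containing `Cn {α}`. -/
def wS (α : L.Sentence) : Set (Set L.Sentence) := L.worldsOf (L.Cn {α})

/-- `⋂ X`: the set of sentences belonging to every world in `X`. -/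
def th (X : Set (Set L.Sentence)) : Set L.Sentence := {φ | ∀ M ∈ X, φ ∈ M}

/-! ### Postulates for an operator `od` on a belief set `K` -/

/-- Weak relative success: `α ∈ K⊙α` or `K⊙α ⊆ K`. -/
def WeakRelativeSuccess (K : Set L.Sentence) (od : L.Sentence → Set L.Sentence) : Prop :=
  ∀ α, α ∈ od α ∨ od α ⊆ K

/-- Closure: `K⊙α = Cn (K⊙α)`. -/
def Closure (od : L.Sentence → Set L.Sentence) : Prop :=
  ∀ α, od α = L.Cn (od α)

/-- Inclusion: `K⊙α ⊆ K + α`. -/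
def Inclusion (K : Set L.Sentence) (od : L.Sentence → Set L.Sentence) : Prop :=
  ∀ α, od α ⊆ L.expand K α

/-- Consistency preservation: if `K` is consistent then `K⊙α` is consistent. -/
def ConsistencyPreservation (K : Set L.Sentence) (od : L.Sentence → Set L.Sentence) : Prop :=
  L.Consistent K → ∀ α, L.Consistent (od α)

/-- Vacuity: if `¬α ∉ K` then `K + α ⊆ K⊙α`. -/
def Vacuity (K : Set L.Sentence) (od : L.Sentence → Set L.Sentence) : Prop :=
  ∀ α, L.neg α ∉ K → L.expand K α ⊆ od α

/-- Weak vacuity: if `¬α ∉ K` then `K ⊆ K⊙α`. -/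
def WeakVacuity (K : Set L.Sentence) (od : L.Sentence → Set L.Sentence) : Prop :=
  ∀ α, L.neg α ∉ K → K ⊆ od α

/-- Extensionality: if `⊢ α ↔ β` then `K⊙α = K⊙β`. -/
def Extensionality (od : L.Sentence → Set L.Sentence) : Prop :=
  ∀ α β, L.biimpl α β ∈ L.Cn ∅ → od α = od β

/-- Strict improvement: if `α ∈ K⊙α` and `⊢ α → β` then `β ∈ K⊙β`. -/
def StrictImprovement (od : L.Sentence → Set L.Sentence) : Prop :=
  ∀ α β, α ∈ od α → L.impl α β ∈ L.Cn ∅ → β ∈ od β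

/-- N-persistence: if `¬β ∈ K⊙β` then `¬β ∈ K⊙α` for all `α`. -/
def NPersistence (od : L.Sentence → Set L.Sentence) : Prop :=
  ∀ α β, L.neg β ∈ od β → L.neg β ∈ od α

/-- N-recovery: `K ⊆ (K⊙α) + ¬α`. -/
def NRecovery (K : Set L.Sentence) (od : L.Sentence → Set L.Sentence) : Prop :=
  ∀ α, K ⊆ L.expand (od α) (L.neg α)

/-- Disjunctive overlap: `K⊙α ∩ K⊙β ⊆ K⊙(α ∨ β)`. -/
def DisjunctiveOverlap (od : L.Sentence → Set L.Sentence) : Prop :=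
  ∀ α β, od α ∩ od β ⊆ od (L.disj α β)

/-- Disjunctive inclusion: if `¬α ∉ K⊙(α ∨ β)` then `K⊙(α ∨ β) ⊆ K⊙α`. -/
def DisjunctiveInclusion (od : L.Sentence → Set L.Sentence) : Prop :=
  ∀ α β, L.neg α ∉ od (L.disj α β) → od (L.disj α β) ⊆ od α

/-- Weak disjunctive inclusion: if `¬α ∉ K⊙(α ∨ β)` then
`(K⊙(α ∨ β)) + (α ∨ β) ⊆ (K⊙α) + α`. -/
def WeakDisjunctiveInclusion (od : L.Sentence → Set L.Sentence) : Prop :=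
  ∀ α β, L.neg α ∉ od (L.disj α β) →
    L.expand (od (L.disj α β)) (L.disj α β) ⊆ L.expand (od α) α

/-! ### AGM revision and two level credibility-limited revision -/

/-- An AGM revision on `K`: postulates (⋆1)–(⋆8). -/
def IsAGMRevision (K : Set L.Sentence) (star : L.Sentence → Set L.Sentence) : Prop :=
  (∀ α, star α = L.Cn (star α)) ∧
  (∀ α, α ∈ star α) ∧
  (∀ α, star α ⊆ L.expand K α) ∧
  (∀ α, L.neg α ∉ K → L.expand K α ⊆ star α) ∧
  (∀ α, L.Consistent {α} → L.Consistent (star α)) ∧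
  (∀ α β, L.biimpl α β ∈ L.Cn ∅ → star α = star β) ∧
  (∀ α β, star α ∩ star β ⊆ star (L.disj α β)) ∧
  (∀ α β, L.neg α ∉ star (L.disj α β) → star (L.disj α β) ⊆ star α)

/-- `od` is the two level CL revision operator induced by `star`, `CH`, `CL`:
`K⊙α = K⋆α` if `α ∈ C_H`; `K⊙α = (K⋆α) ∩ K` if `α ∈ C_L`;
`K⊙α = K` if `α ∉ C_H ∪ C_L`. -/
def IsTwoLevelCL (K : Set L.Sentence) (od star : L.Sentence → Set L.Sentence)
    (CH CL : Set L.Sentence) : Prop :=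
  ∀ α, (α ∈ CH → od α = star α) ∧ (α ∈ CL → od α = star α ∩ K) ∧
    (α ∉ CH ∪ CL → od α = K)

/-- Credibility of logical equivalents. -/
def CredLogEquiv (C : Set L.Sentence) : Prop :=
  ∀ α β, L.biimpl α β ∈ L.Cn ∅ → (α ∈ C ↔ β ∈ C)

/-- Single sentence closure. -/
def SingleSentenceClosure (C : Set L.Sentence) : Prop :=
  ∀ α ∈ C, L.Cn {α} ⊆ C

/-- Element consistency. -/
def ElementConsistency (C : Set L.Sentence) : Prop :=
  ∀ α ∈ C, L.Consistent {α}

/-- Credibility lower bounding (w.r.t. `K`). -/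
def CredLowerBound (K C : Set L.Sentence) : Prop :=
  L.Consistent K → K ⊆ C

/-- Condition (C - ⋆): if `α ∉ C` and `β ∈ C` then `¬α ∈ K⋆β`. -/
def CondCStar (K : Set L.Sentence) (star : L.Sentence → Set L.Sentence)
    (C : Set L.Sentence) : Prop :=
  ∀ α β, α ∉ C → β ∈ C → L.neg α ∈ star β

/-! ### Two level systems of spheres -/

/-- `(Si, S)` is a two level system of spheres centred on `‖K‖`. -/
def IsTwoLevelSystem (K : Set L.Sentence)
    (Si S : Set (Set (Set L.Sentence))) : Prop :=
  (∀ X ∈ S, ∀ M ∈ X, L.IsWorld M) ∧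
  (∀ U ∈ S, ∀ V ∈ S, U ⊆ V ∨ V ⊆ U) ∧
  (∀ U ∈ Si, ∀ V ∈ Si, U ⊆ V ∨ V ⊆ U) ∧
  L.worldsOf K ∈ S ∧ (∀ U ∈ S, L.worldsOf K ⊆ U) ∧
  L.worldsOf K ∈ Si ∧ (∀ U ∈ Si, L.worldsOf K ⊆ U) ∧
  (∀ α, (∃ U ∈ S, (U ∩ L.wS α).Nonempty) →
    ∃ U ∈ S, (U ∩ L.wS α).Nonempty ∧ ∀ V ∈ S, (V ∩ L.wS α).Nonempty → U ⊆ V) ∧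
  (∀ α, (∃ U ∈ Si, (U ∩ L.wS α).Nonempty) →
    ∃ U ∈ Si, (U ∩ L.wS α).Nonempty ∧ ∀ V ∈ Si, (V ∩ L.wS α).Nonempty → U ⊆ V) ∧
  Si ⊆ S ∧
  (∀ X ∈ Si, ∀ Y ∈ S, Y ∉ Si → X ⊆ Y)

/-- `od` is the system of spheres-based two level CL revision operator induced
by `(Si, S)` (centred on `‖K‖`): if `S_α` (the smallest sphere of `S` meeting
`‖α‖`) is in `Si` then `K⊙α = ⋂(S_α ∩ ‖α‖)`; if `S_α ∈ S \ Si` then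
`K⊙α = ⋂(‖K‖ ∪ (S_α ∩ ‖α‖))`; and if no sphere of `S` meets `‖α‖` then
`K⊙α = K`. -/
def IsSphereRevision (K : Set L.Sentence)
    (Si S : Set (Set (Set L.Sentence)))
    (od : L.Sentence → Set L.Sentence) : Prop :=
  ∀ α,
    (∀ Sa ∈ S, (Sa ∩ L.wS α).Nonempty →
      (∀ V ∈ S, (V ∩ L.wS α).Nonempty → Sa ⊆ V) →
      (Sa ∈ Si → od α = L.th (Sa ∩ L.wS α)) ∧
      (Sa ∉ Si → od α = L.th (L.worldsOf K ∪ (Sa ∩ L.wS α)))) ∧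
    ((∀ X ∈ S, X ∩ L.wS α = ∅) → od α = K)

end PropLanguage
namespace PropLanguage

/-- Valuations respecting the connectives. -/
structure IsResp (L : PropLanguage) (v : L.Sentence → Bool) : Prop where
  fls : v L.falsum = false
  ng : ∀ β, v (L.neg β) = !v β
  cj : ∀ β γ, v (L.conj β γ) = (v β && v γ)
  dj : ∀ β γ, v (L.disj β γ) = (v β || v γ)
  im : ∀ β γ, v (L.impl β γ) = (!v β || v γ)
  bi : ∀ β γ, v (L.biimpl β γ) = (v β == v γ)

variable {L : PropLanguage}

theorem cn_sub {A B : Set L.Sentence} (h : A ⊆ L.Cn B) : L.Cn A ⊆ L.Cn B := by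
  have h2 := L.cn_monotony A (L.Cn B) h
  rwa [L.cn_iteration] at h2

theorem cn_taut {A : Set L.Sentence} {c : L.Sentence}
    (h : ∀ v, IsResp L v → v c = true) : c ∈ L.Cn A :=
  L.cn_supraclassical A c fun v hf hn hc hd hi hb _ => h v ⟨hf, hn, hc, hd, hi, hb⟩

theorem cn_entail1 {A : Set L.Sentence} {a c : L.Sentence} (ha : a ∈ L.Cn A)
    (h : ∀ v, IsResp L v → v a = true → v c = true) : c ∈ L.Cn A := by
  have h1 : c ∈ L.Cn {a} :=
    L.cn_supraclassical _ c fun v hf hn hc hd hi hb hA =>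
      h v ⟨hf, hn, hc, hd, hi, hb⟩ (hA a rfl)
  exact cn_sub (by simpa using ha) h1

theorem cn_entail2 {A : Set L.Sentence} {a b c : L.Sentence} (ha : a ∈ L.Cn A)
    (hb : b ∈ L.Cn A)
    (h : ∀ v, IsResp L v → v a = true → v b = true → v c = true) : c ∈ L.Cn A := by
  have h1 : c ∈ L.Cn {a, b} :=
    L.cn_supraclassical _ c fun v hf hn hc hd hi hb' hA =>
      h v ⟨hf, hn, hc, hd, hi, hb'⟩ (hA a (Or.inl rfl)) (hA b (Or.inr rfl))
  refine cn_sub ?_ h1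
  intro x hx
  simp only [Set.mem_insert_iff, Set.mem_singleton_iff] at hx
  rcases hx with rfl | rfl <;> assumption

theorem neg_mem_of_incons {A : Set L.Sentence} {a : L.Sentence}
    (h : ¬ L.Consistent (A ∪ {a})) : L.neg a ∈ L.Cn A := by
  have hf : L.falsum ∈ L.Cn (A ∪ {a}) := not_not.mp h
  have h1 := (L.cn_deduction A a L.falsum).mp hf
  refine cn_entail1 h1 ?_
  intro v hv h2
  rw [hv.im, hv.fls] at h2
  rw [hv.ng]
  cases hva : v a <;> simp_all

theorem incons_of_neg {A : Set L.Sentence} {a : L.Sentence}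
    (hn : L.neg a ∈ L.Cn A) : ¬ L.Consistent (A ∪ {a}) := by
  intro hc
  apply hc
  refine (L.cn_deduction A a L.falsum).mpr (cn_entail1 hn ?_)
  intro v hv h2
  rw [hv.ng] at h2
  rw [hv.im, hv.fls]
  cases hva : v a <;> simp_all

theorem cn_all_of_incons {A : Set L.Sentence} (h : ¬ L.Consistent A)
    (c : L.Sentence) : c ∈ L.Cn A := by
  have hf : L.falsum ∈ L.Cn A := not_not.mp h
  refine cn_entail1 hf ?_
  intro v hv h1
  rw [hv.fls] at h1
  cases h1

theorem cn_union_singleton_of_mem {A : Set L.Sentence} {a : L.Sentence}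
    (ha : a ∈ L.Cn A) : L.Cn (A ∪ {a}) = L.Cn A := by
  apply subset_antisymm
  · exact cn_sub (Set.union_subset (L.cn_inclusion A) (by simpa using ha))
  · exact L.cn_monotony _ _ Set.subset_union_left

theorem cn_union_cn {A B : Set L.Sentence} : L.Cn (A ∪ L.Cn B) = L.Cn (A ∪ B) := by
  apply subset_antisymm
  · refine cn_sub (Set.union_subset ?_ ?_)
    · exact fun x hx => L.cn_inclusion _ (Or.inl hx)
    · exact L.cn_monotony B (A ∪ B) Set.subset_union_right
  · exact L.cn_monotony _ _ (Set.union_subset_union_right A (L.cn_inclusion B))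
theorem chain_bound {X : Type*} {c : Set (Set X)} (hchain : IsChain (· ⊆ ·) c)
    (hne : c.Nonempty) {F : Set X} (hfin : F.Finite) :
    F ⊆ ⋃₀ c → ∃ t ∈ c, F ⊆ t := by
  refine Set.Finite.induction_on (motive := fun F _ => F ⊆ ⋃₀ c → ∃ t ∈ c, F ⊆ t) F hfin ?_ ?_
  · intro _
    obtain ⟨t, ht⟩ := hne
    exact ⟨t, ht, Set.empty_subset t⟩
  · intro a s _ _ ih hsub
    obtain ⟨t1, ht1c, ht1⟩ := ih fun x hx => hsub (Set.mem_insert_of_mem a hx)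
    obtain ⟨t2, ht2c, ht2⟩ := Set.mem_sUnion.mp (hsub (Set.mem_insert a s))
    rcases IsChain.total hchain ht1c ht2c with hle | hle
    · refine ⟨t2, ht2c, ?_⟩
      intro x hx
      rcases Set.mem_insert_iff.mp hx with rfl | hx
      · exact ht2
      · exact hle (ht1 hx)
    · refine ⟨t1, ht1c, ?_⟩
      intro x hx
      rcases Set.mem_insert_iff.mp hx with rfl | hx
      · exact hle ht2
      · exact ht1 hx

theorem exists_world {A : Set L.Sentence} (h : L.Consistent A) :
    ∃ M, L.IsWorld M ∧ A ⊆ M := by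
  have hz : ∀ c ⊆ {B : Set L.Sentence | L.Consistent B}, IsChain (· ⊆ ·) c →
      c.Nonempty → ∃ ub ∈ {B : Set L.Sentence | L.Consistent B}, ∀ s ∈ c, s ⊆ ub := by
    intro c hcS hchain hcne
    refine ⟨⋃₀ c, ?_, fun s hs => Set.subset_sUnion_of_mem hs⟩
    intro hf
    obtain ⟨F, hFsub, hFfin, hfF⟩ := L.cn_compact _ _ hf
    obtain ⟨t, htc, hFt⟩ := chain_bound hchain hcne hFfin hFsub
    exact hcS htc (L.cn_monotony _ _ hFt hfF)
  obtain ⟨m, hAm, hmax⟩ :=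
    zorn_subset_nonempty {B : Set L.Sentence | L.Consistent B} hz A h
  refine ⟨m, ⟨hmax.1, ?_⟩, hAm⟩
  intro M' hM' hsub
  exact subset_antisymm (hmax.2 hM' hsub) hsub

theorem IsWorld.closed {M : Set L.Sentence} (h : L.IsWorld M) : L.Cn M = M := by
  refine h.2 (L.Cn M) ?_ (L.cn_inclusion M)
  show L.falsum ∉ L.Cn (L.Cn M)
  rw [L.cn_iteration]
  exact h.1

theorem IsWorld.not_neg {M : Set L.Sentence} {a : L.Sentence} (h : L.IsWorld M)
    (ha : a ∈ M) (hn : L.neg a ∈ M) : False := by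
  apply h.1
  refine cn_entail2 (L.cn_inclusion M ha) (L.cn_inclusion M hn) ?_
  intro v hv h1 h2
  rw [hv.ng] at h2
  simp_all

theorem IsWorld.mp {M : Set L.Sentence} {a b : L.Sentence} (h : L.IsWorld M)
    (hab : L.impl a b ∈ M) (ha : a ∈ M) : b ∈ M := by
  have hb : b ∈ L.Cn M := by
    refine cn_entail2 (L.cn_inclusion M ha) (L.cn_inclusion M hab) ?_
    intro v hv h1 h2
    rw [hv.im] at h2
    simp_all
  rwa [h.closed] at hb

theorem mem_cn_iff_world {A : Set L.Sentence} {c : L.Sentence} :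
    c ∈ L.Cn A ↔ ∀ M, L.IsWorld M → A ⊆ M → c ∈ M := by
  constructor
  · intro hc M hM hAM
    have h2 := L.cn_monotony A M hAM hc
    rwa [hM.closed] at h2
  · intro hall
    by_contra hc
    have hcons : L.Consistent (A ∪ {L.neg c}) := by
      intro hf
      apply hc
      have h1 := (L.cn_deduction A (L.neg c) L.falsum).mp hf
      refine cn_entail1 h1 ?_
      intro v hv h2
      rw [hv.im, hv.ng, hv.fls] at h2
      cases hvc : v c <;> simp_all
    obtain ⟨M, hM, hsub⟩ := exists_world hcons
    have hc' := hall M hM ((Set.subset_union_left).trans hsub)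
    exact hM.not_neg hc' (hsub (Set.mem_union_right _ rfl))

theorem th_worldsOf (A : Set L.Sentence) : L.th (L.worldsOf A) = L.Cn A := by
  ext c
  simp only [th, worldsOf, Set.mem_setOf_eq]
  rw [mem_cn_iff_world]
  exact ⟨fun h M hM hAM => h M ⟨hM, hAM⟩, fun h M hM => h M hM.1 hM.2⟩

theorem worldsOf_inter (A B : Set L.Sentence) :
    L.worldsOf A ∩ L.worldsOf B = L.worldsOf (A ∪ B) := by
  ext M
  simp only [worldsOf, Set.mem_inter_iff, Set.mem_setOf_eq, Set.union_subset_iff]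
  tauto

theorem th_union (X Y : Set (Set L.Sentence)) : L.th (X ∪ Y) = L.th X ∩ L.th Y := by
  ext c
  simp only [th, Set.mem_inter_iff, Set.mem_setOf_eq, Set.mem_union]
  constructor
  · intro h
    exact ⟨fun M hM => h M (Or.inl hM), fun M hM => h M (Or.inr hM)⟩
  · rintro ⟨h1, h2⟩ M (hM | hM)
    · exact h1 M hM
    · exact h2 M hM

theorem mem_wS {M : Set L.Sentence} {a : L.Sentence} :
    M ∈ L.wS a ↔ L.IsWorld M ∧ a ∈ M := by
  unfold wS worldsOf
  simp only [Set.mem_setOf_eq]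
  constructor
  · rintro ⟨h1, h2⟩
    exact ⟨h1, h2 (L.cn_inclusion _ rfl)⟩
  · rintro ⟨h1, h2⟩
    refine ⟨h1, ?_⟩
    have : L.Cn {a} ⊆ L.Cn M := L.cn_monotony _ _ (by simpa using h2)
    rwa [h1.closed] at this
/-- The chosen "revision" companion of `od`: `K⋆α := (K⊙α)+α`. -/
def sta {L : PropLanguage} (od : L.Sentence → Set L.Sentence) (α : L.Sentence) :
    Set L.Sentence := L.Cn (od α ∪ {α})

/-- The worlds compatible with `(K⊙α)+α`. -/
def fw {L : PropLanguage} (od : L.Sentence → Set L.Sentence) (α : L.Sentence) :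
    Set (Set L.Sentence) := L.worldsOf (sta od α)

/-- The plausibility relation: `α` is at least as plausible as `γ`. -/
def prec {L : PropLanguage} (od : L.Sentence → Set L.Sentence) (α γ : L.Sentence) : Prop :=
  L.neg α ∉ od (L.disj α γ)

/-- The candidate sphere generated by `γ`. -/
def Vs {L : PropLanguage} (K : Set L.Sentence) (od : L.Sentence → Set L.Sentence)
    (γ : L.Sentence) : Set (Set L.Sentence) :=
  {M | M ∈ L.worldsOf K ∨ ∃ δ, L.neg δ ∉ od δ ∧ prec od δ γ ∧ M ∈ fw od δ}

/-- A bundle of all postulates. -/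
structure Ctx (L : PropLanguage) (K : Set L.Sentence)
    (od : L.Sentence → Set L.Sentence) : Prop where
  hK : L.IsBeliefSet K
  hKcons : L.Consistent K
  h1 : L.WeakRelativeSuccess K od
  h2 : L.Closure od
  h3 : L.Inclusion K od
  h4 : L.ConsistencyPreservation K od
  h5 : L.Vacuity K od
  h6 : L.Extensionality od
  h7 : L.StrictImprovement od
  h8 : L.NPersistence od
  h9 : L.NRecovery K od
  h10 : L.DisjunctiveOverlap od
  h11 : L.DisjunctiveInclusion od

namespace Ctx

variable {L : PropLanguage} {K : Set L.Sentence} {od : L.Sentence → Set L.Sentence}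
variable (C : Ctx L K od)
include C

theorem od_cl (α : L.Sentence) : L.Cn (od α) = od α := (C.h2 α).symm

theorem od_cons (α : L.Sentence) : L.Consistent (od α) := C.h4 C.hKcons α

theorem mem_od_of_cn {α c : L.Sentence} (h : c ∈ L.Cn (od α)) : c ∈ od α := by
  rwa [C.od_cl] at h

theorem ent1 {α a c : L.Sentence} (ha : a ∈ od α)
    (h : ∀ v, IsResp L v → v a = true → v c = true) : c ∈ od α :=
  C.mem_od_of_cn (cn_entail1 (L.cn_inclusion _ ha) h)

theorem ent2 {α a b c : L.Sentence} (ha : a ∈ od α) (hb : b ∈ od α)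
    (h : ∀ v, IsResp L v → v a = true → v b = true → v c = true) : c ∈ od α :=
  C.mem_od_of_cn (cn_entail2 (L.cn_inclusion _ ha) (L.cn_inclusion _ hb) h)

theorem high_not_neg {α : L.Sentence} (h : α ∈ od α) : L.neg α ∉ od α := by
  intro hn
  apply C.od_cons α
  refine cn_entail2 (L.cn_inclusion _ h) (L.cn_inclusion _ hn) ?_
  intro v hv h1 h2
  rw [hv.ng] at h2
  simp_all

theorem kent1 {a c : L.Sentence} (ha : a ∈ K)
    (h : ∀ v, IsResp L v → v a = true → v c = true) : c ∈ K := by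
  have h1 : a ∈ L.Cn K := C.hK ▸ ha
  have h2 : c ∈ L.Cn K := cn_entail1 h1 h
  rwa [← C.hK] at h2

theorem noncred_K {α : L.Sentence} (h : L.neg α ∈ od α) : od α = K := by
  have hlow : α ∉ od α := fun hh => C.high_not_neg hh h
  apply subset_antisymm ((C.h1 α).resolve_left hlow)
  have h9 := C.h9 α
  have he : L.expand (od α) (L.neg α) = od α := by
    show L.Cn (od α ∪ {L.neg α}) = od α
    rw [cn_union_singleton_of_mem (by rw [C.od_cl]; exact h), C.od_cl]
  rwa [he] at h9

theorem noncred_all {α : L.Sentence} (h : L.neg α ∈ od α) (γ : L.Sentence) :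
    L.neg α ∈ od γ := C.h8 γ α h

theorem od_sub_sta (α : L.Sentence) : od α ⊆ sta od α :=
  fun x hx => L.cn_inclusion _ (Set.mem_union_left _ hx)

theorem mem_sta_iff {α c : L.Sentence} : c ∈ sta od α ↔ L.impl α c ∈ od α := by
  unfold sta
  rw [L.cn_deduction, C.od_cl]

theorem sta_cons {α : L.Sentence} (h : L.neg α ∉ od α) : L.Consistent (sta od α) := by
  intro hf
  unfold sta at hf
  rw [L.cn_iteration] at hf
  have h1 := (L.cn_deduction _ _ _).mp hf
  apply h
  refine C.mem_od_of_cn (cn_entail1 h1 ?_)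
  intro v hv h2
  rw [hv.im, hv.fls] at h2
  rw [hv.ng]
  cases hva : v α <;> simp_all

theorem fw_nonempty {α : L.Sentence} (h : L.neg α ∉ od α) : (fw od α).Nonempty := by
  obtain ⟨M, hM, hsub⟩ := exists_world (C.sta_cons h)
  exact ⟨M, hM, hsub⟩

theorem fw_sub_wS (α : L.Sentence) : fw od α ⊆ L.wS α := by
  rintro M ⟨hM, hsub⟩
  exact mem_wS.mpr ⟨hM, hsub (L.cn_inclusion _ (Set.mem_union_right _ rfl))⟩

theorem od_disj_comm (α γ : L.Sentence) : od (L.disj α γ) = od (L.disj γ α) := by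
  refine C.h6 _ _ (cn_taut ?_)
  intro v hv
  rw [hv.bi, hv.dj, hv.dj]
  cases hva : v α <;> cases hvg : v γ <;> simp_all

/-- The key ⋆7-style lemma. -/
theorem core {α β ψ : L.Sentence} (hψ : ψ ∈ od α) :
    L.impl α ψ ∈ od (L.disj α β) := by
  by_cases hna : L.neg α ∈ K
  · set β' := L.conj β (L.neg α) with hβ'
    have t1 : L.impl β' (L.neg α) ∈ od β' := by
      refine C.mem_od_of_cn (cn_taut ?_)
      intro v hv
      rw [hv.im, hβ', hv.cj, hv.ng]
      cases hva : v α <;> cases hvb : v β <;> simp_all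
    have t2 : L.impl (L.neg β') (L.neg α) ∈ od β' := by
      have h9 := C.h9 β' hna
      exact C.mem_od_of_cn ((L.cn_deduction _ _ _).mp h9)
    have t3 : L.neg α ∈ od β' := by
      refine C.ent2 t1 t2 ?_
      intro v hv ha hb
      rw [hv.im] at ha hb
      rw [hv.ng] at hb
      cases hvb : v β' <;> simp_all
    have t4 : L.impl α ψ ∈ od β' := by
      refine C.ent1 t3 ?_
      intro v hv ha
      rw [hv.ng] at ha
      rw [hv.im]
      simp_all
    have t5 : L.impl α ψ ∈ od α := by
      refine C.ent1 hψ ?_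
      intro v hv ha
      rw [hv.im]
      simp_all
    have t6 : L.impl α ψ ∈ od (L.disj α β') := C.h10 α β' ⟨t5, t4⟩
    have ext : od (L.disj α β') = od (L.disj α β) := by
      refine C.h6 _ _ (cn_taut ?_)
      intro v hv
      rw [hv.bi, hv.dj, hv.dj, hβ', hv.cj, hv.ng]
      cases hva : v α <;> cases hvb : v β <;> simp_all
    rwa [ext] at t6
  · have k1 : ψ ∈ L.expand K α := C.h3 α hψ
    have k2 : L.impl α ψ ∈ K := by
      have h := (L.cn_deduction K α ψ).mp (by rwa [show L.expand K α = L.Cn (K ∪ {α}) from rfl] at k1)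
      rwa [← C.hK] at h
    have k3 : L.neg (L.disj α β) ∉ K := by
      intro hn
      refine hna (C.kent1 hn ?_)
      intro v hv h
      rw [hv.ng, hv.dj] at h
      rw [hv.ng]
      cases hva : v α <;> simp_all
    have k4 := C.h5 (L.disj α β) k3
    exact k4 (L.cn_inclusion _ (Set.mem_union_left _ k2))

end Ctx
namespace Ctx

variable {L : PropLanguage} {K : Set L.Sentence} {od : L.Sentence → Set L.Sentence}
variable (C : Ctx L K od)
include C

theorem cred_disj {α β : L.Sentence} (h : L.neg α ∉ od α) :
    L.neg (L.disj α β) ∉ od (L.disj α β) := by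
  intro hn
  refine h (C.ent1 (C.noncred_all hn α) ?_)
  intro v hv h1
  rw [hv.ng, hv.dj] at h1
  rw [hv.ng]
  cases hva : v α <;> simp_all

theorem b1 {α δ : L.Sentence} (hδ : L.neg δ ∉ od δ)
    (hna : L.neg α ∈ od (L.disj α δ)) : L.neg α ∈ od δ := by
  have hd : L.neg δ ∉ od (L.disj α δ) := by
    intro hnd
    have hT : L.neg (L.disj α δ) ∈ od (L.disj α δ) := by
      refine C.ent2 hna hnd ?_
      intro v hv ha hb
      rw [hv.ng] at ha hb
      rw [hv.ng, hv.dj]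
      simp_all
    refine hδ (C.ent1 (C.noncred_all hT δ) ?_)
    intro v hv h1
    rw [hv.ng, hv.dj] at h1
    rw [hv.ng]
    cases hvd : v δ <;> simp_all
  have hsub : od (L.disj α δ) ⊆ od δ := by
    rw [C.od_disj_comm]
    exact C.h11 δ α (by rw [← C.od_disj_comm]; exact hd)
  exact hsub hna

theorem prec_of_world' {α δ : L.Sentence} {M : Set L.Sentence}
    (hδ : L.neg δ ∉ od δ) (hM : M ∈ fw od δ) (hαM : α ∈ M) : prec od α δ := by
  intro hna
  have h1 : L.neg α ∈ od δ := C.b1 hδ hna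
  exact hM.1.not_neg hαM (hM.2 (C.od_sub_sta δ h1))

theorem prec_notK {α γ : L.Sentence} (hna : L.neg α ∉ K) : prec od α γ := by
  intro h
  have h2 := C.h3 (L.disj α γ) h
  have h3 : L.impl (L.disj α γ) (L.neg α) ∈ K := by
    have := (L.cn_deduction K (L.disj α γ) (L.neg α)).mp h2
    rwa [← C.hK] at this
  refine hna (C.kent1 h3 ?_)
  intro v hv h4
  rw [hv.im, hv.dj, hv.ng] at h4
  rw [hv.ng]
  cases hva : v α <;> simp_all

theorem trans_prec {α δ γ : L.Sentence} (hp1 : prec od α δ) (hp2 : prec od δ γ) :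
    prec od α γ := by
  intro hc
  have c1 : L.impl (L.disj α γ) (L.neg α) ∈ od (L.disj (L.disj α γ) δ) := C.core hc
  have c2 : L.neg α ∈ od (L.disj (L.disj α γ) δ) := by
    refine C.ent1 c1 ?_
    intro v hv h
    rw [hv.im, hv.dj, hv.ng] at h
    rw [hv.ng]
    cases hva : v α <;> simp_all
  have c3 : L.neg (L.disj δ γ) ∉ od (L.disj (L.disj α γ) δ) := by
    intro hn
    have hT : L.neg (L.disj (L.disj α γ) δ) ∈ od (L.disj (L.disj α γ) δ) := by
      refine C.ent2 c2 hn ?_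
      intro v hv ha hb
      rw [hv.ng] at ha hb
      rw [hv.dj] at hb
      rw [hv.ng, hv.dj, hv.dj]
      cases hva : v α <;> cases hvg : v γ <;> cases hvd : v δ <;> simp_all
    refine hp1 (C.ent1 (C.noncred_all hT (L.disj α δ)) ?_)
    intro v hv h
    rw [hv.ng, hv.dj, hv.dj] at h
    rw [hv.ng]
    cases hva : v α <;> simp_all
  have e1 : od (L.disj (L.disj α γ) δ) = od (L.disj (L.disj δ γ) α) := by
    refine C.h6 _ _ (cn_taut ?_)
    intro v hv
    rw [hv.bi, hv.dj, hv.dj, hv.dj, hv.dj]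
    cases hva : v α <;> cases hvg : v γ <;> cases hvd : v δ <;> simp_all
  have c4 : od (L.disj (L.disj α γ) δ) ⊆ od (L.disj δ γ) := by
    rw [e1]
    exact C.h11 _ _ (by rw [← e1]; exact c3)
  have c5 : L.neg δ ∉ od (L.disj (L.disj α γ) δ) := fun hn => hp2 (c4 hn)
  have c6 : L.neg (L.disj α δ) ∉ od (L.disj (L.disj α γ) δ) := by
    intro hn
    refine c5 (C.ent1 hn ?_)
    intro v hv h
    rw [hv.ng, hv.dj] at h
    rw [hv.ng]
    cases hvd : v δ <;> simp_all
  have e2 : od (L.disj (L.disj α γ) δ) = od (L.disj (L.disj α δ) γ) := by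
    refine C.h6 _ _ (cn_taut ?_)
    intro v hv
    rw [hv.bi, hv.dj, hv.dj, hv.dj, hv.dj]
    cases hva : v α <;> cases hvg : v γ <;> cases hvd : v δ <;> simp_all
  have c7 : od (L.disj (L.disj α γ) δ) ⊆ od (L.disj α δ) := by
    rw [e2]
    exact C.h11 _ _ (by rw [← e2]; exact c6)
  exact hp1 (c7 c2)

theorem tot {α γ : L.Sentence} (hα : L.neg α ∉ od α) (hγ : L.neg γ ∉ od γ) :
    prec od α γ ∨ prec od γ α := by
  by_contra hb
  push_neg at hb
  obtain ⟨ha, hg⟩ := hb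
  have ha' : L.neg α ∈ od (L.disj α γ) := not_not.mp ha
  have hg' : L.neg γ ∈ od (L.disj α γ) := by
    rw [C.od_disj_comm]
    exact not_not.mp hg
  have hT : L.neg (L.disj α γ) ∈ od (L.disj α γ) := by
    refine C.ent2 ha' hg' ?_
    intro v hv h1 h2
    rw [hv.ng] at h1 h2
    rw [hv.ng, hv.dj]
    simp_all
  exact C.cred_disj hα hT

theorem lM {γ δ : L.Sentence} (hγ : γ ∈ od γ) (hδ : δ ∉ od δ) : L.neg δ ∈ od γ := by
  by_contra hnd
  have s1 : L.neg (L.conj γ δ) ∉ od γ := by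
    intro h
    refine hnd (C.ent2 hγ h ?_)
    intro v hv h1 h2
    rw [hv.ng, hv.cj] at h2
    rw [hv.ng]
    cases hvd : v δ <;> simp_all
  have e1 : od (L.disj (L.conj γ δ) (L.conj γ (L.neg δ))) = od γ := by
    refine C.h6 _ _ (cn_taut ?_)
    intro v hv
    rw [hv.bi, hv.dj, hv.cj, hv.cj, hv.ng]
    cases hvg : v γ <;> cases hvd : v δ <;> simp_all
  have s2 : od γ ⊆ od (L.conj γ δ) := by
    have := C.h11 (L.conj γ δ) (L.conj γ (L.neg δ)) (by rw [e1]; exact s1)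
    rwa [e1] at this
  have s4 : L.conj γ δ ∉ od (L.conj γ δ) := by
    intro hx
    refine hδ (C.h7 (L.conj γ δ) δ hx (cn_taut ?_))
    intro v hv
    rw [hv.im, hv.cj]
    cases hvg : v γ <;> cases hvd : v δ <;> simp_all
  have s5 : od (L.conj γ δ) ⊆ K := (C.h1 (L.conj γ δ)).resolve_left s4
  have s6 : γ ∈ K := s5 (s2 hγ)
  have s7 : L.neg γ ∉ K := by
    intro hn
    apply C.hKcons
    have hg : γ ∈ L.Cn K := C.hK ▸ s6
    have hng : L.neg γ ∈ L.Cn K := C.hK ▸ hn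
    refine cn_entail2 hg hng ?_
    intro v hv h1 h2
    rw [hv.ng] at h2
    simp_all
  have s8 : od γ = K := by
    apply subset_antisymm
    · have h3 := C.h3 γ
      have he : L.expand K γ = K := by
        show L.Cn (K ∪ {γ}) = K
        rw [cn_union_singleton_of_mem (C.hK ▸ s6), ← C.hK]
      rwa [he] at h3
    · intro x hx
      exact C.h5 γ s7 (L.cn_inclusion _ (Set.mem_union_left _ hx))
  have s9 : L.neg δ ∉ K := by
    rw [← s8]
    exact hnd
  exact hδ (C.h5 δ s9 (L.cn_inclusion _ (Set.mem_union_right _ rfl)))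

theorem high_of_prec {α γ : L.Sentence} (hγ : γ ∈ od γ) (hp : prec od α γ) :
    α ∈ od α := by
  by_contra hα
  have hg2 : L.disj α γ ∈ od (L.disj α γ) := by
    refine C.h7 γ (L.disj α γ) hγ (cn_taut ?_)
    intro v hv
    rw [hv.im, hv.dj]
    cases hvg : v γ <;> simp_all
  exact hp (C.lM hg2 hα)

theorem low_char {α : L.Sentence} (hl : α ∉ od α) : od α = K ∩ sta od α := by
  apply subset_antisymm
  · intro x hx
    exact ⟨(C.h1 α).resolve_left hl hx, C.od_sub_sta α hx⟩
  · rintro x ⟨hxK, hxs⟩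
    have t1 : L.impl α x ∈ od α := (C.mem_sta_iff).mp hxs
    have t2 : L.impl (L.neg α) x ∈ od α :=
      C.mem_od_of_cn ((L.cn_deduction _ _ _).mp (C.h9 α hxK))
    refine C.ent2 t1 t2 ?_
    intro v hv ha hb
    rw [hv.im] at ha hb
    rw [hv.ng] at hb
    cases hva : v α <;> simp_all

theorem sta_eq_od_of_high {α : L.Sentence} (h : α ∈ od α) : sta od α = od α := by
  unfold sta
  rw [cn_union_singleton_of_mem ((C.od_cl α).symm ▸ h), C.od_cl]

theorem star8 {α δ : L.Sentence} {M : Set L.Sentence}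
    (hpδα : prec od δ α) (hM : L.IsWorld M) (hMs : sta od δ ⊆ M) (hMα : α ∈ M) :
    sta od α ⊆ M := by
  intro φ hφ
  have t1 : L.impl α φ ∈ od α := (C.mem_sta_iff).mp hφ
  have t2 : L.impl α (L.impl α φ) ∈ od (L.disj α δ) := C.core t1
  have t3 : L.impl α φ ∈ od (L.disj α δ) := by
    refine C.ent1 t2 ?_
    intro v hv h
    rw [hv.im, hv.im] at h
    rw [hv.im]
    cases hva : v α <;> simp_all
  have c4 : od (L.disj δ α) ⊆ od δ := C.h11 δ α hpδα
  have t4 : L.impl α φ ∈ od δ := c4 (by rw [← C.od_disj_comm]; exact t3)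
  exact hM.mp (hMs (C.od_sub_sta δ t4)) hMα

theorem self_prec {γ : L.Sentence} (hγ : L.neg γ ∉ od γ) : prec od γ γ := by
  have e : od (L.disj γ γ) = od γ := by
    refine C.h6 _ _ (cn_taut ?_)
    intro v hv
    rw [hv.bi, hv.dj]
    cases hvg : v γ <;> simp_all
  intro h
  rw [e] at h
  exact hγ h

theorem fw_sub_Vs {γ : L.Sentence} (hγ : L.neg γ ∉ od γ) : fw od γ ⊆ Vs K od γ :=
  fun M hM => Or.inr ⟨γ, hγ, C.self_prec hγ, hM⟩

theorem meets_cred {α γ : L.Sentence} {M : Set L.Sentence}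
    (hM : M ∈ Vs K od γ) (hMα : α ∈ M) : L.neg α ∉ od α := by
  intro hn
  rcases hM with hKw | ⟨δ, hδ, _, hMf⟩
  · have hK2 : L.neg α ∈ K := by
      rw [← C.noncred_K hn]
      exact hn
    exact hKw.1.not_neg hMα (hKw.2 hK2)
  · exact hMf.1.not_neg hMα (hMf.2 (C.od_sub_sta δ (C.noncred_all hn δ)))

theorem meets_prec {α γ : L.Sentence} {M : Set L.Sentence}
    (hM : M ∈ Vs K od γ) (hMα : α ∈ M) : prec od α γ := by
  rcases hM with hKw | ⟨δ, hδ, hpδ, hMf⟩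
  · have hna : L.neg α ∉ K := fun h => hKw.1.not_neg hMα (hKw.2 h)
    exact C.prec_notK hna
  · exact C.trans_prec (C.prec_of_world' hδ hMf hMα) hpδ

theorem Vs_mono {γ γ' : L.Sentence} (h : prec od γ γ') : Vs K od γ ⊆ Vs K od γ' := by
  rintro M (hKw | ⟨δ, hδ, hpδ, hMf⟩)
  · exact Or.inl hKw
  · exact Or.inr ⟨δ, hδ, C.trans_prec hpδ h, hMf⟩

theorem K_meets {α : L.Sentence} (h : L.neg α ∉ K) :
    (L.worldsOf K ∩ L.wS α).Nonempty := by
  have hcons : L.Consistent (K ∪ {α}) := by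
    intro hf
    apply h
    have hd := (L.cn_deduction K α L.falsum).mp hf
    have hn : L.neg α ∈ L.Cn K := by
      refine cn_entail1 hd ?_
      intro v hv h2
      rw [hv.im, hv.fls] at h2
      rw [hv.ng]
      cases hva : v α <;> simp_all
    rwa [← C.hK] at hn
  obtain ⟨M, hM, hsub⟩ := exists_world hcons
  refine ⟨M, ⟨hM, (Set.subset_union_left).trans hsub⟩, mem_wS.mpr ⟨hM, hsub (Set.mem_union_right _ rfl)⟩⟩

omit C in
theorem K_not_meets {α : L.Sentence} (h : L.neg α ∈ K) :
    L.worldsOf K ∩ L.wS α = ∅ := by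
  ext M
  simp only [Set.mem_inter_iff, Set.mem_empty_iff_false, iff_false]
  rintro ⟨⟨hMw, hMK⟩, hMs⟩
  exact hMw.not_neg (mem_wS.mp hMs).2 (hMK h)

end Ctx

end PropLanguage

open PropLanguage in
/-- an operator satisfying the eleven listed postulates is a
system of spheres-based two level CL revision operator. -/
theorem postulates_imply_sphere_twoLevelCL
    (L : PropLanguage) (K : Set L.Sentence)
    (hK : L.IsBeliefSet K) (hKcons : L.Consistent K)
    (od : L.Sentence → Set L.Sentence)
    (h1 : L.WeakRelativeSuccess K od) (h2 : L.Closure od)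
    (h3 : L.Inclusion K od) (h4 : L.ConsistencyPreservation K od)
    (h5 : L.Vacuity K od) (h6 : L.Extensionality od)
    (h7 : L.StrictImprovement od) (h8 : L.NPersistence od)
    (h9 : L.NRecovery K od) (h10 : L.DisjunctiveOverlap od)
    (h11 : L.DisjunctiveInclusion od) :
    ∃ Si S : Set (Set (Set L.Sentence)),
      L.IsTwoLevelSystem K Si S ∧ L.IsSphereRevision K Si S od := by
  classical
  have C : Ctx L K od := ⟨hK, hKcons, h1, h2, h3, h4, h5, h6, h7, h8, h9, h10, h11⟩
  clear h1 h2 h3 h4 h5 h6 h7 h9 h10 h11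
  refine ⟨{X | X = L.worldsOf K ∨ ∃ γ, γ ∈ od γ ∧ X = Vs K od γ},
          {X | X = L.worldsOf K ∨ ∃ γ, L.neg γ ∉ od γ ∧ X = Vs K od γ}, ?_, ?_⟩
  case _ =>
    have hWsub : ∀ γ, L.worldsOf K ⊆ Vs K od γ := fun γ M hM => Or.inl hM
    have hVsworld : ∀ γ M, M ∈ Vs K od γ → L.IsWorld M := by
      rintro γ M (hM | ⟨δ, hδ1, hδ2, hMf⟩)
      · exact hM.1
      · exact hMf.1
    have hSi2S : ∀ X, (X = L.worldsOf K ∨ ∃ γ, γ ∈ od γ ∧ X = Vs K od γ) →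
        (X = L.worldsOf K ∨ ∃ γ, L.neg γ ∉ od γ ∧ X = Vs K od γ) := by
      rintro X (rfl | ⟨γ, hγ, rfl⟩)
      · exact Or.inl rfl
      · exact Or.inr ⟨γ, C.high_not_neg hγ, rfl⟩
    have hchain : ∀ U, (U = L.worldsOf K ∨ ∃ γ, L.neg γ ∉ od γ ∧ U = Vs K od γ) →
        ∀ V, (V = L.worldsOf K ∨ ∃ γ, L.neg γ ∉ od γ ∧ V = Vs K od γ) →
        U ⊆ V ∨ V ⊆ U := by
      rintro U (rfl | ⟨γ, hγ, rfl⟩) V (rfl | ⟨γ', hγ', rfl⟩)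
      · exact Or.inl subset_rfl
      · exact Or.inl (hWsub γ')
      · exact Or.inr (hWsub γ)
      · rcases C.tot hγ hγ' with hp | hp
        · exact Or.inl (C.Vs_mono hp)
        · exact Or.inr (C.Vs_mono hp)
    have credOf : ∀ {α : L.Sentence} {U M},
        (U = L.worldsOf K ∨ ∃ γ, L.neg γ ∉ od γ ∧ U = Vs K od γ) →
        M ∈ U → M ∈ L.wS α → L.neg α ∉ od α := by
      rintro α U M (rfl | ⟨γ, hγ, rfl⟩) hMU hMs
      · intro hn
        have hg : L.neg α ∈ K := by rw [← C.noncred_K hn]; exact hn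
        exact hMU.1.not_neg (mem_wS.mp hMs).2 (hMU.2 hg)
      · exact C.meets_cred hMU (mem_wS.mp hMs).2
    refine ⟨?_, ?_, ?_, Or.inl rfl, ?_, Or.inl rfl, ?_, ?_, ?_, ?_, ?_⟩
    · rintro X (rfl | ⟨γ, hγ, rfl⟩) M hM
      · exact hM.1
      · exact hVsworld γ M hM
    · exact hchain
    · exact fun U hU V hV => hchain U (hSi2S U hU) V (hSi2S V hV)
    · rintro U (rfl | ⟨γ, hγ, rfl⟩)
      · exact subset_rfl
      · exact hWsub γ
    · rintro U (rfl | ⟨γ, hγ, rfl⟩)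
      · exact subset_rfl
      · exact hWsub γ
    · -- smallest sphere in S
      intro α hex
      obtain ⟨U, hU, M, hMU, hMs⟩ := hex
      have hcred : L.neg α ∉ od α := credOf hU hMU hMs
      by_cases hna : L.neg α ∈ K
      · refine ⟨Vs K od α, Or.inr ⟨α, hcred, rfl⟩, ?_, ?_⟩
        · obtain ⟨M1, hM1⟩ := C.fw_nonempty hcred
          exact ⟨M1, C.fw_sub_Vs hcred hM1, C.fw_sub_wS α hM1⟩
        · rintro V (rfl | ⟨γ', hγ', rfl⟩) ⟨M2, hM2U, hM2s⟩
          · exfalso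
            have hc : M2 ∈ L.worldsOf K ∩ L.wS α := ⟨hM2U, hM2s⟩
            rw [Ctx.K_not_meets hna] at hc
            exact hc
          · exact C.Vs_mono (C.meets_prec hM2U (mem_wS.mp hM2s).2)
      · refine ⟨L.worldsOf K, Or.inl rfl, C.K_meets hna, ?_⟩
        rintro V (rfl | ⟨γ', hγ', rfl⟩) _
        · exact subset_rfl
        · exact hWsub γ'
    · -- smallest sphere in Si
      intro α hex
      obtain ⟨U, hU, M, hMU, hMs⟩ := hex
      by_cases hna : L.neg α ∈ K
      · rcases hU with rfl | ⟨γ, hγ, rfl⟩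
        · exfalso
          have hc : M ∈ L.worldsOf K ∩ L.wS α := ⟨hMU, hMs⟩
          rw [Ctx.K_not_meets hna] at hc
          exact hc
        · have hp : prec od α γ := C.meets_prec hMU (mem_wS.mp hMs).2
          have hhigh : α ∈ od α := C.high_of_prec hγ hp
          have hcred : L.neg α ∉ od α := C.high_not_neg hhigh
          refine ⟨Vs K od α, Or.inr ⟨α, hhigh, rfl⟩, ?_, ?_⟩
          · obtain ⟨M1, hM1⟩ := C.fw_nonempty hcred
            exact ⟨M1, C.fw_sub_Vs hcred hM1, C.fw_sub_wS α hM1⟩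
          · rintro V (rfl | ⟨γ', hγ', rfl⟩) ⟨M2, hM2U, hM2s⟩
            · exfalso
              have hc : M2 ∈ L.worldsOf K ∩ L.wS α := ⟨hM2U, hM2s⟩
              rw [Ctx.K_not_meets hna] at hc
              exact hc
            · exact C.Vs_mono (C.meets_prec hM2U (mem_wS.mp hM2s).2)
      · refine ⟨L.worldsOf K, Or.inl rfl, C.K_meets hna, ?_⟩
        rintro V hV _
        rcases hSi2S V hV with rfl | ⟨γ', hγ', rfl⟩
        · exact subset_rfl
        · exact hWsub γ'
    · exact fun X hX => hSi2S X hX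
    · -- Si spheres are contained in non-Si spheres
      rintro X (rfl | ⟨γ, hγ, rfl⟩) Y hY hYn
      · rcases hY with rfl | ⟨δ, hδ, rfl⟩
        · exact subset_rfl
        · exact hWsub δ
      · rcases hY with rfl | ⟨δ, hδ, rfl⟩
        · exact absurd (Or.inl rfl) hYn
        · have hδlow : δ ∉ od δ := fun hh => hYn (Or.inr ⟨δ, hh, rfl⟩)
          rcases C.tot (C.high_not_neg hγ) hδ with hp | hp
          · exact C.Vs_mono hp
          · exfalso
            have hg2 : L.disj δ γ ∈ od (L.disj δ γ) := by
              refine C.h7 γ _ hγ (cn_taut ?_)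
              intro v hv
              rw [hv.im, hv.dj]
              cases hvg : v γ <;> simp_all
            exact hp (C.lM hg2 hδlow)
  case _ =>
    intro α
    constructor
    · intro Sa hSa hne hmin
      by_cases hna : L.neg α ∈ K
      · obtain ⟨M0, hM0U, hM0s⟩ := hne
        rcases hSa with rfl | ⟨γ0, hγ0, hEq⟩
        · exfalso
          have hc : M0 ∈ L.worldsOf K ∩ L.wS α := ⟨hM0U, hM0s⟩
          rw [Ctx.K_not_meets hna] at hc
          exact hc
        · subst hEq
          have hcred : L.neg α ∉ od α := C.meets_cred hM0U (mem_wS.mp hM0s).2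
          have hprec0 : prec od α γ0 := C.meets_prec hM0U (mem_wS.mp hM0s).2
          have hfw_ne := C.fw_nonempty hcred
          have hVmeets : (Vs K od α ∩ L.wS α).Nonempty := by
            obtain ⟨M1, hM1⟩ := hfw_ne
            exact ⟨M1, C.fw_sub_Vs hcred hM1, C.fw_sub_wS α hM1⟩
          have hSaV : Vs K od γ0 = Vs K od α :=
            subset_antisymm (hmin _ (Or.inr ⟨α, hcred, rfl⟩) hVmeets) (C.Vs_mono hprec0)
          have ekey : Vs K od α ∩ L.wS α = fw od α := by
            apply subset_antisymm
            · rintro M ⟨hMV, hMw⟩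
              have hαM : α ∈ M := (mem_wS.mp hMw).2
              rcases hMV with hKw | ⟨δ, hδ, hpδ, hMf⟩
              · exfalso
                have hc : M ∈ L.worldsOf K ∩ L.wS α := ⟨hKw, hMw⟩
                rw [Ctx.K_not_meets hna] at hc
                exact hc
              · exact ⟨(mem_wS.mp hMw).1, C.star8 hpδ hMf.1 hMf.2 hαM⟩
            · intro M hM
              exact ⟨C.fw_sub_Vs hcred hM, C.fw_sub_wS α hM⟩
          have hstacl : L.Cn (sta od α) = sta od α := by
            unfold sta
            rw [L.cn_iteration]
          rw [hSaV]
          constructor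
          · intro hSi
            rcases hSi with hWeq | ⟨γ', hγ', hEq'⟩
            · exfalso
              obtain ⟨M1, hM1a, hM1b⟩ := hVmeets
              have hc : M1 ∈ L.worldsOf K ∩ L.wS α := ⟨hWeq ▸ hM1a, hM1b⟩
              rw [Ctx.K_not_meets hna] at hc
              exact hc
            · obtain ⟨M1, hM1⟩ := hfw_ne
              have hM1V : M1 ∈ Vs K od γ' := hEq' ▸ (C.fw_sub_Vs hcred hM1)
              have hp' : prec od α γ' :=
                C.meets_prec hM1V (mem_wS.mp (C.fw_sub_wS α hM1)).2
              have hhigh : α ∈ od α := C.high_of_prec hγ' hp'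
              rw [ekey]
              show od α = L.th (L.worldsOf (sta od α))
              rw [th_worldsOf, hstacl, C.sta_eq_od_of_high hhigh]
          · intro hSi
            have hlow : α ∉ od α := fun hh => hSi (Or.inr ⟨α, hh, rfl⟩)
            rw [ekey]
            show od α = L.th (L.worldsOf K ∪ L.worldsOf (sta od α))
            rw [th_union, th_worldsOf, th_worldsOf, hstacl, ← C.hK]
            exact C.low_char hlow
      · have hWm : (L.worldsOf K ∩ L.wS α).Nonempty := C.K_meets hna
        have hWsubSa : L.worldsOf K ⊆ Sa := by
          rcases hSa with rfl | ⟨γ, hγ, rfl⟩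
          · exact subset_rfl
          · exact fun M hM => Or.inl hM
        have hSaW : Sa = L.worldsOf K :=
          subset_antisymm (hmin _ (Or.inl rfl) hWm) hWsubSa
        constructor
        · intro _
          rw [hSaW]
          have hiw : L.worldsOf K ∩ L.wS α = L.worldsOf (K ∪ L.Cn {α}) :=
            worldsOf_inter K (L.Cn {α})
          rw [hiw, th_worldsOf, cn_union_cn]
          exact subset_antisymm (C.h3 α) (C.h5 α hna)
        · intro hnotSi
          exact absurd (Or.inl hSaW) hnotSi
    · intro hall
      by_cases hcred : L.neg α ∈ od α
      · exact C.noncred_K hcred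
      · exfalso
        obtain ⟨M1, hM1⟩ := C.fw_nonempty hcred
        have hc : M1 ∈ Vs K od α ∩ L.wS α :=
          ⟨C.fw_sub_Vs hcred hM1, C.fw_sub_wS α hM1⟩
        rw [hall (Vs K od α) (Or.inr ⟨α, hcred, rfl⟩)] at hc
        exact hc
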